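/- For k < n/2, there is an injection from the set of north-east lattice paths from (0,0) to (k, n-k) into the set of north-east lattice paths from (0,0) to (k+1, n-k-1). -/

import Mathlib

open Finset

/-- A north-east lattice path, recorded by its list of steps. -/
def IsNEPath (p : List (ℤ × ℤ)) : Prop :=
  ∀ s ∈ p, s = (1, 0) ∨ s = (0, 1)

lemma ne_sum_fn (n : ℕ) (f : Fin n → ℤ × ℤ) (hf : ∀ i, f i = (1,0) ∨ f i = (0,1)) :
    ∑ i, f i = (((univ.filter fun i => f i = (1,0)).card : ℤ),
      (n : ℤ) - ((univ.filter fun i => f i = (1,0)).card : ℤ)) := by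
  have hc : ((univ.filter fun i => f i = (1,0)).card : ℤ)
      = ∑ i, if f i = (1,0) then (1:ℤ) else 0 := by
    rw [Finset.sum_boole]
  have h1 : ∑ i, (f i).1 = ∑ i, if f i = (1,0) then (1:ℤ) else 0 := by
    refine Finset.sum_congr rfl fun i _ => ?_
    rcases hf i with h | h <;> simp [h]
  have h2 : ∑ i, (f i).2 = ∑ i, if f i = (1,0) then (0:ℤ) else (1:ℤ) := by
    refine Finset.sum_congr rfl fun i _ => ?_
    rcases hf i with h | h <;> simp [h]
  have h3 : ∑ i, (if f i = (1,0) then (0:ℤ) else 1)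
      = (n : ℤ) - ∑ i, if f i = (1,0) then (1:ℤ) else 0 := by
    rw [eq_sub_iff_add_eq, ← Finset.sum_add_distrib]
    have : ∀ i ∈ (univ : Finset (Fin n)),
        ((if f i = (1,0) then (0:ℤ) else 1) + if f i = (1,0) then (1:ℤ) else 0) = 1 := by
      intro i _; split <;> ring
    rw [Finset.sum_congr rfl this]
    simp
  ext
  · rw [Prod.fst_sum, h1, hc]
  · rw [Prod.snd_sum, h2, h3, hc]

/-- A list is `ofFn` of a `Fin n`-indexed function once we know its length is `n`. -/
lemma ne_eq_ofFn (p : List (ℤ × ℤ)) (n : ℕ) (hl : p.length = n) :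
    p = List.ofFn (fun i : Fin n => p.get (Fin.cast hl.symm i)) := by
  subst hl
  exact (List.ofFn_get p).symm

/-- The path associated to a set of east-step positions. -/
def neOfFinset (n : ℕ) (s : Finset (Fin n)) : List (ℤ × ℤ) :=
  List.ofFn (fun i : Fin n => if i ∈ s then ((1:ℤ), (0:ℤ)) else (0, 1))

lemma neOfFinset_isPath (n : ℕ) (s : Finset (Fin n)) : IsNEPath (neOfFinset n s) := by
  intro x hx
  rw [neOfFinset, List.mem_ofFn] at hx
  obtain ⟨i, rfl⟩ := hx
  by_cases hi : i ∈ s <;> simp [hi]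

lemma neOfFinset_sum (n : ℕ) (s : Finset (Fin n)) :
    (neOfFinset n s).sum = ((s.card : ℤ), (n : ℤ) - s.card) := by
  have hfd : ∀ i : Fin n,
      (if i ∈ s then ((1:ℤ),(0:ℤ)) else (0,1)) = (1,0) ∨
      (if i ∈ s then ((1:ℤ),(0:ℤ)) else (0,1)) = (0,1) := by
    intro i; split <;> simp
  have hfilter : (univ.filter fun i : Fin n =>
      (if i ∈ s then ((1:ℤ),(0:ℤ)) else (0,1)) = (1,0)) = s := by
    ext i
    by_cases hi : i ∈ s <;> simp [hi, Prod.ext_iff]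
  rw [neOfFinset, List.sum_ofFn, ne_sum_fn n _ hfd, hfilter]

lemma neOfFinset_injective (n : ℕ) : Function.Injective (neOfFinset n) := by
  intro s t hst
  rw [neOfFinset, neOfFinset, List.ofFn_inj] at hst
  ext i
  have hi := congrFun hst i
  by_cases h1 : i ∈ s <;> by_cases h2 : i ∈ t <;>
    simp [h1, h2, Prod.ext_iff] at hi ⊢

theorem ne_path_injection (n k : ℕ) (h : 2 * k < n) :
    ∃ f : {p : List (ℤ × ℤ) // IsNEPath p ∧ p.sum = ((k : ℤ), (n : ℤ) - k)} →
        {p : List (ℤ × ℤ) // IsNEPath p ∧ p.sum = ((k : ℤ) + 1, (n : ℤ) - k - 1)},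
      Function.Injective f := by
  classical
  -- Step 0: every source path has length n, and its set of east steps has card k
  have key : ∀ p : List (ℤ × ℤ), IsNEPath p → p.sum = ((k : ℤ), (n : ℤ) - k) →
      ∃ hl : p.length = n,
        (univ.filter fun i : Fin n => p.get (Fin.cast hl.symm i) = (1,0)).card = k := by
    intro p hp hs
    have hfd : ∀ i : Fin p.length, p.get i = (1,0) ∨ p.get i = (0,1) :=
      fun i => hp _ (p.get_mem i)
    have hsum := ne_sum_fn p.length p.get hfd
    have hps : p.sum = ∑ i, p.get i := by
      conv_lhs => rw [← List.ofFn_get p]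
      rw [List.sum_ofFn]
    rw [← hps, hs] at hsum
    set c := (univ.filter fun i : Fin p.length => p.get i = (1,0)).card with hcdef
    have h1 : (k : ℤ) = c := congrArg Prod.fst hsum
    have h2 : (n : ℤ) - k = (p.length : ℤ) - c := congrArg Prod.snd hsum
    have hl : p.length = n := by
      have : (p.length : ℤ) = n := by omega
      exact_mod_cast this
    refine ⟨hl, ?_⟩
    have hck : c = k := by exact_mod_cast h1.symm
    rw [← hck, hcdef]
    subst hl
    rfl
  -- forward injection into k-element subsets of `Fin n`
  let g1 : {p : List (ℤ × ℤ) // IsNEPath p ∧ p.sum = ((k : ℤ), (n : ℤ) - k)} →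
      {s : Finset (Fin n) // s.card = k} := fun ⟨p, hp, hs⟩ =>
    ⟨univ.filter fun i : Fin n => p.get (Fin.cast (key p hp hs).choose.symm i) = (1,0),
      (key p hp hs).choose_spec⟩
  have hg1 : Function.Injective g1 := by
    rintro ⟨p, hp, hsp⟩ ⟨q, hq, hsq⟩ hpq
    have hlp := (key p hp hsp).choose
    have hlq := (key q hq hsq).choose
    have hss : ∀ i : Fin n,
        (p.get (Fin.cast hlp.symm i) = (1,0)) ↔ (q.get (Fin.cast hlq.symm i) = (1,0)) := by
      intro i
      have := congrArg (fun s : {s : Finset (Fin n) // s.card = k} => i ∈ s.1) hpq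
      simpa [g1] using this
    have hpq' : p = q := by
      rw [ne_eq_ofFn p n hlp, ne_eq_ofFn q n hlq]
      congr 1
      funext i
      rcases hp _ (p.get_mem (Fin.cast hlp.symm i)) with h1 | h1
      · rw [h1, ((hss i).mp h1).symm]
      · rcases hq _ (q.get_mem (Fin.cast hlq.symm i)) with h2 | h2
        · have hpe := (hss i).mpr h2
          rw [h1] at hpe
          exact absurd hpe (by decide)
        · rw [h1]; exact h2.symm
    exact Subtype.ext hpq'
  -- middle embedding between subset types, using cardinalities
  have hchoose : n.choose k ≤ n.choose (k + 1) := by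
    have h1 : n.choose (k+1) * (k+1) = n.choose k * (n - k) := Nat.choose_succ_right_eq n k
    have h2 : k + 1 ≤ n - k := by omega
    have h3 : n.choose k * (k + 1) ≤ n.choose (k+1) * (k+1) := by
      rw [h1]; exact Nat.mul_le_mul_left _ h2
    exact Nat.le_of_mul_le_mul_right h3 (Nat.succ_pos k)
  have hcard : Fintype.card {s : Finset (Fin n) // s.card = k}
      ≤ Fintype.card {s : Finset (Fin n) // s.card = k + 1} := by
    rw [Fintype.card_finset_len, Fintype.card_finset_len, Fintype.card_fin]
    exact hchoose
  obtain ⟨e2⟩ := Function.Embedding.nonempty_of_card_le hcard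
  -- backward injection from (k+1)-element subsets to target paths
  let g3 : {s : Finset (Fin n) // s.card = k + 1} →
      {p : List (ℤ × ℤ) // IsNEPath p ∧ p.sum = ((k : ℤ) + 1, (n : ℤ) - k - 1)} :=
    fun ⟨s, hs⟩ => ⟨neOfFinset n s, neOfFinset_isPath n s, by
      rw [neOfFinset_sum, hs, Prod.mk.injEq]; push_cast; exact ⟨rfl, by ring⟩⟩
  have hg3 : Function.Injective g3 := by
    rintro ⟨s, hs⟩ ⟨t, ht⟩ hst
    have : neOfFinset n s = neOfFinset n t := congrArg Subtype.val hst
    exact Subtype.ext (neOfFinset_injective n this)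
  exact ⟨g3 ∘ e2 ∘ g1, hg3.comp (e2.injective.comp hg1)⟩
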